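/- Fix a vector h ∈ ℂᴺ. The function (x, X) ↦ x² · h^H X^{-1} h is jointly convex on the set ℝ × {N×N Hermitian positive definite complex matrices}; here h^H X^{-1} h is a real nonnegative number since X^{-1} is Hermitian positive definite. -/

import Mathlib

open Matrix ComplexOrder

private lemma real_smul_mat {N : ℕ} (r : ℝ) (M : Matrix (Fin N) (Fin N) ℂ) :
    r • M = (r : ℂ) • M := by
  ext i j
  simp [Complex.real_smul]

private lemma smul_posSemidef {N : ℕ} {M : Matrix (Fin N) (Fin N) ℂ}
    (hM : M.PosSemidef) {r : ℝ} (hr : 0 ≤ r) : (r • M).PosSemidef := by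
  rw [real_smul_mat]
  refine ⟨?_, fun x => ?_⟩
  · have := hM.isHermitian
    unfold Matrix.IsHermitian at this ⊢
    rw [conjTranspose_smul, this]
    simp
  · exact (hM.smul (Complex.zero_le_real.mpr hr)).2 x

private lemma smul_posDef {N : ℕ} {M : Matrix (Fin N) (Fin N) ℂ}
    (hM : M.PosDef) {r : ℝ} (hr : 0 < r) : (r • M).PosDef := by
  rw [real_smul_mat]
  refine ⟨?_, fun x hx => ?_⟩
  · have := hM.isHermitian
    unfold Matrix.IsHermitian at this ⊢
    rw [conjTranspose_smul, this]
    simp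
  · exact (hM.smul (Complex.zero_lt_real.mpr hr)).2 hx

private lemma combo_posDef {N : ℕ} {A B : Matrix (Fin N) (Fin N) ℂ}
    (hA : A.PosDef) (hB : B.PosDef) {a b : ℝ} (ha : 0 ≤ a) (hb : 0 ≤ b)
    (hab : a + b = 1) : (a • A + b • B).PosDef := by
  rcases eq_or_lt_of_le ha with ha0 | ha0
  · have hb1 : b = 1 := by linarith
    simp [← ha0, hb1, hB]
  · exact (smul_posDef hA ha0).add_posSemidef (smul_posSemidef hB.posSemidef hb)

private lemma dot_re_comm {N : ℕ} (u v : Fin N → ℂ) :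
    (star u ⬝ᵥ v).re = (star v ⬝ᵥ u).re := by
  rw [star_dotProduct]; simp

/-- key pointwise inequality: for `X` positive definite,
`2 x Re(hᴴ y) - Re(yᴴ X y) ≤ x² Re(hᴴ X⁻¹ h)`. -/
private lemma key {N : ℕ} (h : Fin N → ℂ) {X : Matrix (Fin N) (Fin N) ℂ}
    (hX : X.PosDef) (x : ℝ) (y : Fin N → ℂ) :
    2 * x * (star h ⬝ᵥ y).re - (star y ⬝ᵥ X.mulVec y).re
      ≤ x ^ 2 * (star h ⬝ᵥ X⁻¹.mulVec h).re := by
  set w : Fin N → ℂ := X⁻¹.mulVec h with hw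
  have hdet : IsUnit X.det := (Matrix.isUnit_iff_isUnit_det _).mp hX.isUnit
  have hXw : X.mulVec w = h := by
    rw [hw, mulVec_mulVec, Matrix.mul_nonsing_inv X hdet, one_mulVec]
  have e1 : ∀ v : Fin N → ℂ, star w ⬝ᵥ X.mulVec v = star h ⬝ᵥ v := by
    intro v
    rw [dotProduct_mulVec, ← hX.isHermitian.eq, ← star_mulVec, hXw]
  set z : Fin N → ℂ := y - (x : ℂ) • w with hz
  have hpos : 0 ≤ (star z ⬝ᵥ X.mulVec z).re := hX.posSemidef.re_dotProduct_nonneg z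
  have expand : star z ⬝ᵥ X.mulVec z
      = star y ⬝ᵥ X.mulVec y - (x : ℂ) * (star y ⬝ᵥ h)
        - (x : ℂ) * (star h ⬝ᵥ y) + (x : ℂ) * (x : ℂ) * (star h ⬝ᵥ w) := by
    have hXz : X.mulVec z = X.mulVec y - (x : ℂ) • h := by
      rw [hz, mulVec_sub, mulVec_smul, hXw]
    rw [hXz, hz]
    rw [star_sub, star_smul]
    simp only [sub_dotProduct, dotProduct_sub, smul_dotProduct, dotProduct_smul,
      smul_eq_mul, star_trivial, Complex.star_def, Complex.conj_ofReal]
    rw [e1 y, show star w ⬝ᵥ h = star h ⬝ᵥ w by rw [← e1 w, hXw]]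
    ring
  have e2 : (star y ⬝ᵥ h).re = (star h ⬝ᵥ y).re := by
    have := dot_re_comm (star y) h
    simpa using dot_re_comm y h
  rw [expand] at hpos
  simp only [Complex.sub_re, Complex.add_re, Complex.mul_re, Complex.mul_im, Complex.ofReal_re,
    Complex.ofReal_im, zero_mul, mul_zero, sub_zero, zero_sub, add_zero, zero_add, e2]
    at hpos ⊢
  nlinarith [hpos]

/-- Joint convexity of the matrix-fractional function
`(x, X) ↦ x² · hᴴ X⁻¹ h` on `ℝ × {Hermitian positive definite matrices}`. -/
theorem matrixFractional_convexOn {N : ℕ} (h : Fin N → ℂ) :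
    ConvexOn ℝ {p : ℝ × Matrix (Fin N) (Fin N) ℂ | p.2.PosDef}
      (fun p => p.1 ^ 2 * (star h ⬝ᵥ (p.2⁻¹).mulVec h).re) := by
  constructor
  · intro p hp q hq a b ha hb hab
    exact combo_posDef hp hq ha hb hab
  · rintro ⟨x₁, X₁⟩ h1 ⟨x₂, X₂⟩ h2 a b ha hb hab
    simp only [Set.mem_setOf_eq] at h1 h2
    simp only [Prod.smul_mk, Prod.mk_add_mk, smul_eq_mul]
    set X : Matrix (Fin N) (Fin N) ℂ := a • X₁ + b • X₂ with hXdef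
    have hX : X.PosDef := combo_posDef h1 h2 ha hb hab
    set x : ℝ := a * x₁ + b * x₂ with hxdef
    set w : Fin N → ℂ := X⁻¹.mulVec h with hw
    set y : Fin N → ℂ := (x : ℂ) • w with hy
    set t : ℝ := (star h ⬝ᵥ w).re with ht
    have hdet : IsUnit X.det := (Matrix.isUnit_iff_isUnit_det _).mp hX.isUnit
    have hXw : X.mulVec w = h := by
      rw [hw, mulVec_mulVec, Matrix.mul_nonsing_inv X hdet, one_mulVec]
    -- value of hᴴ y
    have hhy : (star h ⬝ᵥ y).re = x * t := by
      rw [hy, dotProduct_smul, smul_eq_mul, Complex.mul_re]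
      simp [ht]
    -- quadratic form of combination at y
    have hyXy : (star y ⬝ᵥ X.mulVec y).re = x * x * t := by
      rw [hy, mulVec_smul, dotProduct_smul, star_smul, smul_dotProduct]
      simp only [smul_eq_mul, Complex.star_def, Complex.conj_ofReal, hXw]
      rw [← mul_assoc]
      simp [Complex.mul_re, ← Complex.ofReal_mul, ht]
      exact Or.inl (dot_re_comm w h)
    have hsplit : (star y ⬝ᵥ X.mulVec y).re
        = a * (star y ⬝ᵥ X₁.mulVec y).re + b * (star y ⬝ᵥ X₂.mulVec y).re := by
      rw [hXdef, real_smul_mat, real_smul_mat, add_mulVec, smul_mulVec,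
        smul_mulVec, dotProduct_add, dotProduct_smul, dotProduct_smul]
      simp [Complex.add_re, Complex.mul_re]
    have k1 := key h h1 x₁ y
    have k2 := key h h2 x₂ y
    rw [hhy] at k1 k2
    have A := mul_le_mul_of_nonneg_left k1 ha
    have B := mul_le_mul_of_nonneg_left k2 hb
    have C : a * (star y ⬝ᵥ X₁.mulVec y).re + b * (star y ⬝ᵥ X₂.mulVec y).re
        = x * x * t := by rw [← hsplit, hyXy]
    have D : a * (2 * x₁ * (x * t)) + b * (2 * x₂ * (x * t)) = 2 * (x * x * t) := by
      rw [hxdef]; ring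
    have goal_eq : x ^ 2 * (star h ⬝ᵥ X⁻¹.mulVec h).re = x * x * t := by
      rw [← hw, ← ht]; ring
    clear_value X x w y t
    have E : x ^ 2 * t = x * x * t := by ring
    linarith [A, B, C, D, E]
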